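/- arXiv:0802.2755 — 7 statements merged into one kernel-verified Lean document; each statement's English description precedes it below -/
import Mathlib

section
/- Let D=(V,A) be a directed graph with S ⊆ V and f: S → ℤ≥0 such that D is (S,f)-proper, and let D* be obtained from D by adding a vertex s* and f(s_i) parallel arcs from each s_i to s*. Then every D*-rooted connector B satisfies |B| ≥ ∑_{v ∈ V} f(R_D(v)) − (|A| + f(S)). -/
open Finset

attribute [local instance] Classical.propDecidable

universe u v

/-- One step from `u` to `w` along an arc belonging to `P`. -/
def ArcStep {V E : Type} (tl hd : E → V) (P : Set E) (u w : V) : Prop :=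
  ∃ e ∈ P, tl e = u ∧ hd e = w

/-- Directed reachability from `u` to `w` using only arcs in `P`. -/
def ArcReach {V E : Type} (tl hd : E → V) (P : Set E) (u w : V) : Prop :=
  Relation.ReflTransGen (ArcStep tl hd P) u w

/-- Connectivity in the underlying undirected graph, using only arcs in `P`. -/
def UConn {V E : Type} (tl hd : E → V) (P : Set E) (u w : V) : Prop :=
  Relation.ReflTransGen (fun a b => ArcStep tl hd P a b ∨ ArcStep tl hd P b a) u w

/-- `R_D(v)`: the set of specified vertices (in `S`) reachable from `v`. -/
noncomputable def RD {V E : Type} (tl hd : E → V) (S : Finset V) (v : V) : Finset V :=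
  S.filter (fun s => ArcReach tl hd Set.univ v s)

/-- `f(R_D(v))`. -/
noncomputable def fR {V E : Type} (tl hd : E → V) (S : Finset V) (f : V → ℕ) (v : V) : ℕ :=
  ∑ s ∈ RD tl hd S v, f s

/-- `T` is an in-tree rooted at `root` spanning the vertex set `span`:
every non-root vertex of `span` has a unique outgoing arc in `T`, the root has none,
all arcs stay inside `span`, and every vertex of `span` reaches the root within `T`. -/
structure IsInTree {V E : Type} (tl hd : E → V) (root : V) (span : Set V)
    (T : Finset E) : Prop where
  mem_tail : ∀ e ∈ T, tl e ∈ span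
  mem_head : ∀ e ∈ T, hd e ∈ span
  root_mem : root ∈ span
  out_unique : ∀ v ∈ span, v ≠ root → ∃! e, e ∈ T ∧ tl e = v
  root_no_out : ∀ e ∈ T, tl e ≠ root
  reaches_root : ∀ v ∈ span, ArcReach tl hd (↑T : Set E) v root

/-- Index type for a `D`-canonical family: for each `s ∈ S` there are `f s` indices. -/
def TreeIdx {V : Type} (S : Finset V) (f : V → ℕ) : Type :=
  Σ s : {x : V // x ∈ S}, Fin (f s.1)

noncomputable instance {V : Type} (S : Finset V) (f : V → ℕ) : Fintype (TreeIdx S f) := by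
  unfold TreeIdx; infer_instance

/-- The family `T` is a `D`-canonical set of in-trees: for each `s ∈ S` and each
`j < f s`, the corresponding member is an in-tree rooted at `s` spanning the set of
vertices from which `s` is reachable. -/
def IsCanonical {V E : Type} (tl hd : E → V) (S : Finset V) (f : V → ℕ)
    (T : TreeIdx S f → Finset E) : Prop :=
  ∀ i : TreeIdx S f,
    IsInTree tl hd i.1.1 {v | ArcReach tl hd Set.univ v i.1.1} (T i)

/-- The family covers all arcs. -/
def CoversAll {V E : Type} {S : Finset V} {f : V → ℕ}
    (T : TreeIdx S f → Finset E) : Prop :=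
  ∀ e : E, ∃ i, e ∈ T i

/-- The members of the family are pairwise arc-disjoint. -/
def ArcDisjointFam {V E : Type} {S : Finset V} {f : V → ℕ}
    (T : TreeIdx S f → Finset E) : Prop :=
  ∀ i j, i ≠ j → Disjoint (T i) (T j)

/-- Tail map of `D*`: vertices are `Option V` (`none` is the apex `s*`); arcs are the
arcs of `D` together with, for each `s ∈ S`, `f s` parallel arcs from `s` to `s*`. -/
def starTail {V E : Type} (tl : E → V) (S : Finset V) (f : V → ℕ) :
    E ⊕ TreeIdx S f → Option V :=
  Sum.elim (fun e => some (tl e)) (fun p => some p.1.1)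

/-- Head map of `D*`. -/
def starHead {V E : Type} (hd : E → V) (S : Finset V) (f : V → ℕ) :
    E ⊕ TreeIdx S f → Option V :=
  Sum.elim (fun e => some (hd e)) (fun _ => none)

/-- `λ(u,w) ≥ k`: every cut separating `u` from `w` contains at least `k` arcs. -/
def LambdaGe {V' E' : Type} (tl hd : E' → V') (u w : V') (k : ℕ) : Prop :=
  ∀ W : Set V', u ∈ W → w ∉ W → k ≤ Nat.card {e : E' // tl e ∈ W ∧ hd e ∉ W}

/-- `D` is `(S,f)`-proper: `|δ_{D*}(v)| ≤ f(R_D(v))` for all `v ∈ V`. -/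
def IsProper {V E : Type} (tl hd : E → V) (S : Finset V) (f : V → ℕ) : Prop :=
  ∀ v : V,
    Nat.card {e : E ⊕ TreeIdx S f // starTail tl S f e = some v} ≤ fR tl hd S f v

/-- `B` (given by `tB, hB`) is a `D*`-rooted connector:
`λ(v, s*; D* + B) ≥ f(R_D(v))` for every vertex `v`. -/
def IsRootedConnector {V E B : Type} (tl hd : E → V) (S : Finset V) (f : V → ℕ)
    (tB hB : B → V) : Prop :=
  ∀ v : V,
    LambdaGe (starTail (Sum.elim tl tB) S f) (starHead (Sum.elim hd hB) S f)
      (some v) none (fR tl hd S f v)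

/-- Arcs of `B` are parallel to arcs of `A`. -/
def ParallelTo {V E B : Type} (tl hd : E → V) (tB hB : B → V) : Prop :=
  ∀ b : B, ∃ e : E, tl e = tB b ∧ hd e = hB b

/-- for an `(S,f)`-proper `D`, every `D*`-rooted connector `B` satisfies
`|B| ≥ ∑_{v ∈ V} f(R_D(v)) − (|A| + f(S))`. -/
theorem stmt3 {V A B : Type} [Fintype V] [Fintype A] [Fintype B]
    (tl hd : A → V) (tB hB : B → V) (S : Finset V) (f : V → ℕ)
    (hproper : IsProper tl hd S f)
    (hpar : ParallelTo tl hd tB hB)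
    (hconn : IsRootedConnector tl hd S f tB hB) :
    (∑ v : V, (fR tl hd S f v : ℤ)) - ((Fintype.card A : ℤ) + ∑ s ∈ S, (f s : ℤ)) ≤
      (Nat.card B : ℤ) := by
  classical
  -- For each v, apply the connectivity lower bound to the cut W = {some v}.
  set tl' := starTail (Sum.elim tl tB) S f with htl'
  set hd' := starHead (Sum.elim hd hB) S f with hhd'
  -- the "tail" vertex of each arc of D*+B, as an element of V
  set g : (A ⊕ B) ⊕ TreeIdx S f → V :=
    Sum.elim (Sum.elim tl tB) (fun p => p.1.1) with hg
  have hgt : ∀ e, tl' e = some (g e) := by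
    rintro (e | p) <;> rfl
  have key : ∀ v : V, fR tl hd S f v ≤ Fintype.card {e // g e = v} := by
    intro v
    have h1 := hconn v ({some v} : Set (Option V)) rfl (by simp)
    rw [Nat.card_eq_fintype_card] at h1
    refine h1.trans (Fintype.card_subtype_mono _ _ ?_)
    intro e he
    have : tl' e = some v := he.1
    rw [hgt e] at this
    exact Option.some_injective _ this
  have hsum : ∑ v : V, Fintype.card {e // g e = v}
      = Fintype.card ((A ⊕ B) ⊕ TreeIdx S f) := by
    rw [← Fintype.card_sigma]
    exact Fintype.card_congr (Equiv.sigmaFiberEquiv g)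
  have hTI : Fintype.card (TreeIdx S f) = ∑ s ∈ S, f s := by
    show Fintype.card (Σ s : {x : V // x ∈ S}, Fin (f s.1)) = ∑ s ∈ S, f s
    rw [Fintype.card_sigma]
    simp [Finset.sum_attach S f]
  have hcard : Fintype.card ((A ⊕ B) ⊕ TreeIdx S f)
      = Fintype.card A + Fintype.card B + ∑ s ∈ S, f s := by
    rw [Fintype.card_sum, Fintype.card_sum, hTI]
  have hfin : ∑ v : V, fR tl hd S f v
      ≤ Fintype.card A + Fintype.card B + ∑ s ∈ S, f s := by
    calc ∑ v : V, fR tl hd S f v ≤ ∑ v : V, Fintype.card {e // g e = v} :=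
          Finset.sum_le_sum fun v _ => key v
      _ = _ := by rw [hsum, hcard]
  have hB' : (Nat.card B : ℤ) = (Fintype.card B : ℤ) := by
    rw [Nat.card_eq_fintype_card]
  rw [hB']
  have := (Nat.cast_le (α := ℤ)).2 hfin
  push_cast at this ⊢
  linarith
end

section
/- Let D=(V,A) be an (S,f)-proper directed graph, and suppose there exists a D*-rooted connector B with |B| = opt_D := ∑_{v ∈ V} f(R_D(v)) − (|A| + f(S)). Assume that there exists a (D+B)-canonical set T' of arc-disjoint in-trees. Then T' uses every arc of A ∪ B, i.e., the union of the arc sets of the in-trees of T' equals A ∪ B. -/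
open Finset

attribute [local instance] Classical.propDecidable

universe u v

/-- Reachability in `D + B` equals reachability in `D` when arcs of `B` are
parallel to arcs of `A`. -/
lemma reach_iff {V A B : Type} (tl hd : A → V) (tB hB : B → V)
    (hpar : ParallelTo tl hd tB hB) (u w : V) :
    ArcReach (Sum.elim tl tB) (Sum.elim hd hB) Set.univ u w ↔
      ArcReach tl hd Set.univ u w := by
  constructor
  · intro h
    refine Relation.ReflTransGen.mono ?_ u w h
    rintro a b ⟨e, -, he1, he2⟩
    cases e with
    | inl e => exact ⟨e, trivial, he1, he2⟩
    | inr b' =>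
      obtain ⟨e, h1, h2⟩ := hpar b'
      exact ⟨e, trivial, by simpa [h1] using he1, by simpa [h2] using he2⟩
  · intro h
    refine Relation.ReflTransGen.mono ?_ u w h
    rintro a b ⟨e, -, he1, he2⟩
    exact ⟨Sum.inl e, trivial, he1, he2⟩

/-- An in-tree on span `span` has `|span| - 1` arcs. -/
lemma tree_card {V E : Type} [Fintype V] (tl hd : E → V) (root : V)
    (span : Set V) (T : Finset E) (h : IsInTree tl hd root span T) :
    (Finset.univ.filter (fun v => v ∈ span)).card = T.card + 1 := by
  classical
  have hbij : T.card =
      (Finset.univ.filter (fun v => v ∈ span ∧ v ≠ root)).card := by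
    apply Finset.card_bij (fun e _ => tl e)
    · intro e he
      simp only [Finset.mem_filter, Finset.mem_univ, true_and]
      exact ⟨h.mem_tail e he, h.root_no_out e he⟩
    · intro e1 h1 e2 h2 heq
      obtain ⟨e, he, huniq⟩ := h.out_unique (tl e1) (h.mem_tail e1 h1)
        (h.root_no_out e1 h1)
      have := huniq e1 ⟨h1, rfl⟩
      have := huniq e2 ⟨h2, heq.symm⟩
      simp_all
    · intro v hv
      simp only [Finset.mem_filter, Finset.mem_univ, true_and] at hv
      obtain ⟨e, ⟨he, hte⟩, -⟩ := h.out_unique v hv.1 hv.2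
      exact ⟨e, he, hte⟩
  have hset : Finset.univ.filter (fun v => v ∈ span) =
      insert root (Finset.univ.filter (fun v => v ∈ span ∧ v ≠ root)) := by
    ext v
    simp only [Finset.mem_filter, Finset.mem_univ, true_and, Finset.mem_insert]
    constructor
    · intro hv
      by_cases hvr : v = root
      · exact Or.inl hvr
      · exact Or.inr ⟨hv, hvr⟩
    · rintro (rfl | ⟨hv, -⟩)
      · exact h.root_mem
      · exact hv
  rw [hset, Finset.card_insert_of_notMem (by simp), hbij]

set_option maxHeartbeats 1000000 in
/-- if `D` is `(S,f)`-proper, `B` is a `D*`-rooted connector of size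
`opt_D`, and `T'` is a `(D+B)`-canonical set of arc-disjoint in-trees, then the union
of the arc sets of the in-trees of `T'` equals `A ∪ B`. -/
theorem stmt9 {V A B : Type} [Fintype V] [Fintype A] [Fintype B]
    (tl hd : A → V) (tB hB : B → V) (S : Finset V) (f : V → ℕ)
    (hproper : IsProper tl hd S f)
    (hpar : ParallelTo tl hd tB hB)
    (hconn : IsRootedConnector tl hd S f tB hB)
    (hsize : (Nat.card B : ℤ) = (∑ v : V, (fR tl hd S f v : ℤ)) -
        ((Fintype.card A : ℤ) + ∑ s ∈ S, (f s : ℤ)))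
    (T' : TreeIdx S f → Finset (A ⊕ B))
    (hcan : IsCanonical (Sum.elim tl tB) (Sum.elim hd hB) S f T')
    (hdisj : ArcDisjointFam T') :
    ∀ e : A ⊕ B, ∃ i, e ∈ T' i := by
  classical
  set N : V → ℕ :=
    fun s => (Finset.univ.filter (fun v => ArcReach tl hd Set.univ v s)).card with hN
  -- each tree has N(root) - 1 arcs
  have htree : ∀ i : TreeIdx S f, ((T' i).card : ℤ) = (N i.1.1 : ℤ) - 1 := by
    intro i
    have h := tree_card _ _ _ _ _ (hcan i)
    have hfeq : (Finset.univ.filter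
        (fun v => v ∈ {v | ArcReach (Sum.elim tl tB) (Sum.elim hd hB)
          Set.univ v i.1.1})).card = N i.1.1 := by
      congr 1
      apply Finset.filter_congr
      intro v _
      simpa using reach_iff tl hd tB hB hpar v i.1.1
    rw [hfeq] at h
    rw [h]; push_cast; ring
  -- sum over all indices
  have hsum : (∑ i : TreeIdx S f, ((T' i).card : ℤ)) =
      ∑ s ∈ S, (f s : ℤ) * ((N s : ℤ) - 1) := by
    have h1 : (∑ i : TreeIdx S f, ((T' i).card : ℤ)) =
        ∑ i : TreeIdx S f, ((N i.1.1 : ℤ) - 1) :=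
      Finset.sum_congr rfl (fun i _ => htree i)
    rw [h1]
    have hsig : (∑ i : TreeIdx S f, ((N i.1.1 : ℤ) - 1)) =
        ∑ s : {x : V // x ∈ S}, ∑ _j : Fin (f s.1), ((N s.1 : ℤ) - 1) := by
      rw [show (Finset.univ : Finset (TreeIdx S f)) =
          Finset.univ.sigma (fun s : {x : V // x ∈ S} => (Finset.univ : Finset (Fin (f s.1))))
        from (Finset.univ_sigma_univ).symm]
      exact Finset.sum_sigma (f := fun i : Sigma (fun s : {x : V // x ∈ S} => Fin (f s.1)) => ((N i.1.1 : ℤ) - 1)) _ _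
    rw [hsig]
    rw [← Finset.sum_coe_sort S (fun s => (f s : ℤ) * ((N s : ℤ) - 1))]
    apply Finset.sum_congr rfl
    intro s _
    simp [mul_comm]
    ring
  -- ∑_v fR v = ∑_{s ∈ S} f s * N s
  have hfR : (∑ v : V, (fR tl hd S f v : ℤ)) = ∑ s ∈ S, (f s : ℤ) * (N s : ℤ) := by
    have h1 : ∀ v : V, (fR tl hd S f v : ℤ) =
        ∑ s ∈ S, (if ArcReach tl hd Set.univ v s then (f s : ℤ) else 0) := by
      intro v
      rw [fR, RD, Finset.sum_filter]
      push_cast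
      rfl
    rw [Finset.sum_congr rfl (fun v _ => h1 v), Finset.sum_comm]
    apply Finset.sum_congr rfl
    intro s _
    rw [← Finset.sum_filter, Finset.sum_const, hN]
    try simp [mul_comm]
  -- total arc count
  have htotal : (∑ i : TreeIdx S f, ((T' i).card : ℤ)) =
      (Fintype.card A : ℤ) + (Fintype.card B : ℤ) := by
    rw [hsum]
    have : (∑ s ∈ S, (f s : ℤ) * ((N s : ℤ) - 1)) =
        (∑ s ∈ S, (f s : ℤ) * (N s : ℤ)) - ∑ s ∈ S, (f s : ℤ) := by
      rw [← Finset.sum_sub_distrib]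
      apply Finset.sum_congr rfl; intro s _; ring
    rw [this, ← hfR]
    have hB' : (Nat.card B : ℤ) = (Fintype.card B : ℤ) := by
      rw [Nat.card_eq_fintype_card]
    rw [hB'] at hsize
    linarith
  -- the union of the trees
  set U : Finset (A ⊕ B) := Finset.univ.biUnion T' with hU
  have hcard : U.card = Fintype.card (A ⊕ B) := by
    have h1 : U.card = ∑ i : TreeIdx S f, (T' i).card := by
      apply Finset.card_biUnion
      intro i _ j _ hij
      exact hdisj i j hij
    have h2 : (U.card : ℤ) = (Fintype.card (A ⊕ B) : ℤ) := by
      rw [h1, Fintype.card_sum]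
      push_cast at htotal ⊢
      linarith
    exact_mod_cast h2
  have hUuniv : U = Finset.univ := Finset.eq_univ_of_card U hcard
  intro e
  have : e ∈ U := hUuniv ▸ Finset.mem_univ e
  rw [hU] at this
  simpa using Finset.mem_biUnion.mp this
end

section
/- Let D=(V,A) be an (S,f)-proper directed graph, D_+ the graph obtained from D by adding opt_D parallel copies of every arc of A, with arc set A_+* for D_+*, and let w: A_+* → ℝ≥0 be the weight function that is 0 on arcs of A* and 1 on all added copies. If I ⊆ A_+* is a complete D_+*-intersection, then w(I) ≥ opt_D, with equality if and only if A* ⊆ I. -/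
open Finset

attribute [local instance] Classical.propDecidable

universe u v

/-- `T` is a spanning tree (of the underlying undirected graph) on the vertex set
`span`: all arcs stay inside `span`, `span` is connected via `T`, and
`|T| + 1 = |span|`. -/
def IsSpanTree {V' E' : Type} (tl hd : E' → V') (span : Set V') (T : Finset E') : Prop :=
  (∀ e ∈ T, tl e ∈ span ∧ hd e ∈ span) ∧
  (∀ u ∈ span, ∀ w ∈ span, UConn tl hd (↑T : Set E') u w) ∧
  T.card + 1 = Nat.card span

/-- The vertex set `V^i_D ∪ {s*}` of `D*`: the apex together with all vertices from
which `s` is reachable in `D`. -/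
def starSpan {V E : Type} (tl hd : E → V) (s : V) : Set (Option V) :=
  {x | x = none ∨ ∃ v : V, x = some v ∧ ArcReach tl hd Set.univ v s}

/-- `I` is a complete `D*`-intersection: `I` partitions into sets `J i`
(for `i` ranging over the `f s` copies, `s ∈ S`), each forming a spanning tree of
`V^i_D ∪ {s*}` in `D*`, and `|δ_{D*}(v) ∩ I| = f(R_D(v))` for every `v ∈ V` while no
arc of `I` has tail `s*`. -/
def CompleteIntersection {V E : Type} (tl hd : E → V) (S : Finset V) (f : V → ℕ)
    (I : Finset (E ⊕ TreeIdx S f)) : Prop :=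
  (∃ J : TreeIdx S f → Finset (E ⊕ TreeIdx S f),
    (∀ i j, i ≠ j → Disjoint (J i) (J j)) ∧
    (∀ e, e ∈ I ↔ ∃ i, e ∈ J i) ∧
    (∀ i : TreeIdx S f,
      IsSpanTree (starTail tl S f) (starHead hd S f) (starSpan tl hd i.1.1) (J i))) ∧
  (∀ v : V, (I.filter (fun e => starTail tl S f e = some v)).card = fR tl hd S f v) ∧
  (I.filter (fun e => starTail tl S f e = none)).card = 0

/-- Weight function on the arcs of `D_+*`: `1` on the added parallel copies and `0`
on the arcs of `A*`. -/
def copyWeight {A C T' : Type} : (A ⊕ C) ⊕ T' → ℕ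
  | Sum.inl (Sum.inr _) => 1
  | _ => 0

/-- An arc of `D_+*` belongs to `A*` (i.e., it is not one of the added copies). -/
def isOrig {A C T' : Type} : (A ⊕ C) ⊕ T' → Prop
  | Sum.inl (Sum.inr _) => False
  | _ => True

/-- Tail vertex of an arc of `D*`. -/
def tailV {V E : Type} (tl : E → V) {S : Finset V} {f : V → ℕ} :
    E ⊕ TreeIdx S f → V
  | Sum.inl e => tl e
  | Sum.inr t => t.1.1

lemma starTail_eq_tailV {V E : Type} (tl : E → V) (S : Finset V) (f : V → ℕ)
    (e : E ⊕ TreeIdx S f) : starTail tl S f e = some (tailV tl e) := by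
  cases e <;> rfl

lemma card_treeIdx {V : Type} (S : Finset V) (f : V → ℕ) :
    Fintype.card (TreeIdx S f) = ∑ s ∈ S, f s := by
  have h : Fintype.card (TreeIdx S f)
      = Fintype.card (Σ s : {x : V // x ∈ S}, Fin (f s.1)) := by
    convert rfl
    rfl
  rw [h, Fintype.card_sigma]
  simp only [Fintype.card_fin]
  rw [← Finset.sum_coe_sort S f]

/-- for `(S,f)`-proper `D`, let `D_+` add `opt_D` parallel copies of
every arc and `w` be `0` on `A*`, `1` on the copies. If `I` is a complete
`D_+*`-intersection, then `w(I) ≥ opt_D`, with equality iff `A* ⊆ I`. -/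
theorem stmt11 {V A : Type} [Fintype V] [Fintype A]
    (tl hd : A → V) (S : Finset V) (f : V → ℕ)
    (hproper : IsProper tl hd S f)
    (opt : ℕ)
    (hopt : (opt : ℤ) = (∑ v : V, (fR tl hd S f v : ℤ)) -
        ((Fintype.card A : ℤ) + ∑ s ∈ S, (f s : ℤ)))
    (I : Finset ((A ⊕ A × Fin opt) ⊕ TreeIdx S f))
    (hI : CompleteIntersection (Sum.elim tl (fun p => tl p.1))
      (Sum.elim hd (fun p => hd p.1)) S f I) :
    opt ≤ ∑ e ∈ I, copyWeight e ∧
      (∑ e ∈ I, copyWeight e = opt ↔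
        ∀ e : (A ⊕ A × Fin opt) ⊕ TreeIdx S f, isOrig e → e ∈ I) := by
  classical
  obtain ⟨-, hcount, -⟩ := hI
  set tl' : A ⊕ A × Fin opt → V := Sum.elim tl (fun p => tl p.1) with htl'
  set hd' : A ⊕ A × Fin opt → V := Sum.elim hd (fun p => hd p.1) with hhd'
  -- reachability in D_+ coincides with reachability in D
  have hstep : ∀ u w : V, ArcStep tl' hd' Set.univ u w ↔ ArcStep tl hd Set.univ u w := by
    intro u w
    constructor
    · rintro ⟨e, -, h1, h2⟩
      cases e with
      | inl a => exact ⟨a, Set.mem_univ _, h1, h2⟩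
      | inr p => exact ⟨p.1, Set.mem_univ _, h1, h2⟩
    · rintro ⟨a, -, h1, h2⟩
      exact ⟨Sum.inl a, Set.mem_univ _, h1, h2⟩
  have hreach : ∀ u w : V, ArcReach tl' hd' Set.univ u w ↔ ArcReach tl hd Set.univ u w :=
    fun u w => ⟨fun h => Relation.ReflTransGen.mono (fun a b => (hstep a b).1) u w h,
      fun h => Relation.ReflTransGen.mono (fun a b => (hstep a b).2) u w h⟩
  have hfR : ∀ v : V, fR tl' hd' S f v = fR tl hd S f v := by
    intro v
    unfold fR RD
    congr 1
    apply Finset.filter_congr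
    intro s _
    simp [hreach]
  -- |I| = ∑_v fR v
  have hIcard : I.card = ∑ v : V, fR tl hd S f v := by
    rw [Finset.card_eq_sum_card_fiberwise
      (f := fun e => tailV tl' e) (t := Finset.univ) (fun e _ => Finset.mem_univ _)]
    refine Finset.sum_congr rfl fun v _ => ?_
    rw [← hfR v, ← hcount v]
    congr 1
    apply Finset.filter_congr
    intro e _
    rw [starTail_eq_tailV]
    simp
  -- counting original arcs
  set m : ℕ := Fintype.card A + ∑ s ∈ S, f s with hm
  have horig : (Finset.univ.filter
      (fun e : (A ⊕ A × Fin opt) ⊕ TreeIdx S f => isOrig e)).card = m := by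
    have himg : (Finset.univ.filter
        (fun e : (A ⊕ A × Fin opt) ⊕ TreeIdx S f => isOrig e))
        = Finset.univ.image (fun x : A ⊕ TreeIdx S f =>
            (Sum.map Sum.inl id x : (A ⊕ A × Fin opt) ⊕ TreeIdx S f)) := by
      ext e
      simp only [Finset.mem_filter, Finset.mem_univ, true_and, Finset.mem_image]
      constructor
      · intro he
        rcases e with (a | c) | t
        · exact ⟨Sum.inl a, rfl⟩
        · exact absurd he (by simp [isOrig])
        · exact ⟨Sum.inr t, rfl⟩
      · rintro ⟨x, rfl⟩
        cases x <;> simp [isOrig, Sum.map]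
    rw [himg, Finset.card_image_of_injective _ (by
      intro x y hxy
      cases x <;> cases y <;> simp_all [Sum.map])]
    rw [Finset.card_univ, Fintype.card_sum, card_treeIdx]
  have hk : (I.filter (fun e => isOrig e)).card ≤ m := by
    rw [← horig]
    exact Finset.card_le_card (Finset.filter_subset_filter _ (Finset.subset_univ I))
  -- weight is the number of non-original arcs in I
  have hW : ∑ e ∈ I, copyWeight e = (I.filter (fun e => ¬ isOrig e)).card := by
    rw [Finset.card_filter]
    refine Finset.sum_congr rfl fun e _ => ?_
    rcases e with (a | c) | t <;> simp [copyWeight, isOrig]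
  have hsplit : (I.filter (fun e => isOrig e)).card
      + (I.filter (fun e => ¬ isOrig e)).card = I.card :=
    Finset.card_filter_add_card_filter_not _
  -- arithmetic on opt
  have hNm : opt + m = ∑ v : V, fR tl hd S f v := by
    have h : ((opt + m : ℕ) : ℤ) = ((∑ v : V, fR tl hd S f v : ℕ) : ℤ) := by
      push_cast
      rw [hopt, hm]
      push_cast
      ring
    exact_mod_cast h
  have key : (I.filter (fun e => isOrig e)).card + ∑ e ∈ I, copyWeight e = opt + m := by
    rw [hW, hsplit, hIcard, hNm]
  constructor
  · omega
  · constructor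
    · intro heq e he
      have hkm : (I.filter (fun e => isOrig e)).card = m := by omega
      have hEq : I.filter (fun e => isOrig e)
          = Finset.univ.filter
            (fun e : (A ⊕ A × Fin opt) ⊕ TreeIdx S f => isOrig e) :=
        Finset.eq_of_subset_of_card_le
          (Finset.filter_subset_filter _ (Finset.subset_univ I)) (by omega)
      have : e ∈ I.filter (fun e => isOrig e) := by
        rw [hEq]
        simpa using he
      exact (Finset.mem_filter.mp this).1
    · intro hall
      have hsub : Finset.univ.filter
          (fun e : (A ⊕ A × Fin opt) ⊕ TreeIdx S f => isOrig e)
          ⊆ I.filter (fun e => isOrig e) := by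
        intro e he
        simp only [Finset.mem_filter, Finset.mem_univ, true_and] at he
        exact Finset.mem_filter.mpr ⟨hall e he, he⟩
      have hmk : m ≤ (I.filter (fun e => isOrig e)).card := horig ▸ Finset.card_le_card hsub
      omega
end

section
/- Let D=(V,A) be an (S,f)-proper directed graph. There exists a D*-rooted connector of size exactly opt_D if and only if there exists a complete D_+*-intersection I with w(I) = opt_D, where D_+ is D with opt_D parallel copies added to every arc and w is 0 on A* and 1 on the added arcs. -/
open Finset

attribute [local instance] Classical.propDecidable

universe u v

section Helpers

variable {V : Type}

lemma reach_mono {E1 E2 : Type} {t1 h1 : E1 → V} {t2 h2 : E2 → V}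
    (hpar : ∀ e1 : E1, ∃ e2 : E2, t2 e2 = t1 e1 ∧ h2 e2 = h1 e1)
    {u w : V} (h : ArcReach t1 h1 Set.univ u w) : ArcReach t2 h2 Set.univ u w := by
  induction h with
  | refl => exact Relation.ReflTransGen.refl
  | tail _ hstep ih =>
    obtain ⟨e, -, hte, hhe⟩ := hstep
    obtain ⟨e2, ht2, hh2⟩ := hpar e
    exact ih.tail ⟨e2, Set.mem_univ _, ht2.trans hte, hh2.trans hhe⟩

lemma RD_eq {E1 E2 : Type} {t1 h1 : E1 → V} {t2 h2 : E2 → V}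
    (h12 : ∀ e1 : E1, ∃ e2 : E2, t2 e2 = t1 e1 ∧ h2 e2 = h1 e1)
    (h21 : ∀ e2 : E2, ∃ e1 : E1, t1 e1 = t2 e2 ∧ h1 e1 = h2 e2) (S : Finset V) :
    ∀ v, RD t1 h1 S v = RD t2 h2 S v := by
  intro v
  unfold RD
  apply Finset.filter_congr
  intro s _
  exact ⟨fun h => reach_mono h12 h, fun h => reach_mono h21 h⟩

lemma fR_eq {E1 E2 : Type} {t1 h1 : E1 → V} {t2 h2 : E2 → V}
    (h12 : ∀ e1 : E1, ∃ e2 : E2, t2 e2 = t1 e1 ∧ h2 e2 = h1 e1)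
    (h21 : ∀ e2 : E2, ∃ e1 : E1, t1 e1 = t2 e2 ∧ h1 e1 = h2 e2) (S : Finset V)
    (f : V → ℕ) : ∀ v, fR t1 h1 S f v = fR t2 h2 S f v := by
  intro v; unfold fR; rw [RD_eq h12 h21 S v]

lemma starSpan_eq {E1 E2 : Type} {t1 h1 : E1 → V} {t2 h2 : E2 → V}
    (h12 : ∀ e1 : E1, ∃ e2 : E2, t2 e2 = t1 e1 ∧ h2 e2 = h1 e1)
    (h21 : ∀ e2 : E2, ∃ e1 : E1, t1 e1 = t2 e2 ∧ h1 e1 = h2 e2) (s : V) :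
    starSpan t1 h1 s = starSpan t2 h2 s := by
  unfold starSpan
  ext x
  simp only [Set.mem_setOf_eq]
  refine or_congr Iff.rfl ⟨?_, ?_⟩ <;> rintro ⟨v, rfl, hr⟩
  · exact ⟨v, rfl, reach_mono h12 hr⟩
  · exact ⟨v, rfl, reach_mono h21 hr⟩

lemma transfer {E E' : Type} (S : Finset V) (f : V → ℕ)
    (tE hE : E → V) (tE' hE' : E' → V)
    (φ : E ⊕ TreeIdx S f → E' ⊕ TreeIdx S f)
    (I : Finset (E ⊕ TreeIdx S f))
    (hinj : Set.InjOn φ ↑I)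
    (ht : ∀ x ∈ I, starTail tE' S f (φ x) = starTail tE S f x)
    (hh : ∀ x ∈ I, starHead hE' S f (φ x) = starHead hE S f x)
    (hspan : ∀ s : V, starSpan tE' hE' s = starSpan tE hE s)
    (hfR : ∀ v, fR tE' hE' S f v = fR tE hE S f v)
    (hI : CompleteIntersection tE hE S f I) :
    CompleteIntersection tE' hE' S f (I.image φ) := by
  obtain ⟨⟨J, hdisj, hcover, htree⟩, hdeg, hnone⟩ := hI
  have hJI : ∀ i, J i ⊆ I := fun i x hx => (hcover x).mpr ⟨i, hx⟩
  refine ⟨⟨fun i => (J i).image φ, ?_, ?_, ?_⟩, ?_, ?_⟩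
  · intro i j hij
    rw [Finset.disjoint_left]
    rintro y hy hy'
    obtain ⟨x, hx, rfl⟩ := Finset.mem_image.mp hy
    obtain ⟨x', hx', hxx⟩ := Finset.mem_image.mp hy'
    have hx'' : x' = x := hinj (hJI j hx') (hJI i hx) hxx
    exact (Finset.disjoint_left.mp (hdisj i j hij)) hx (hx'' ▸ hx')
  · intro e
    simp only [Finset.mem_image]
    constructor
    · rintro ⟨x, hx, rfl⟩
      obtain ⟨i, hi⟩ := (hcover x).mp hx
      exact ⟨i, x, hi, rfl⟩
    · rintro ⟨i, x, hx, rfl⟩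
      exact ⟨x, hJI i hx, rfl⟩
  · intro i
    obtain ⟨hmem, hconn, hcard⟩ := htree i
    refine ⟨?_, ?_, ?_⟩
    · rintro y hy
      obtain ⟨x, hx, rfl⟩ := Finset.mem_image.mp hy
      rw [hspan, ht x (hJI i hx), hh x (hJI i hx)]
      exact hmem x hx
    · intro u hu w hw
      rw [hspan] at hu hw
      refine Relation.ReflTransGen.mono ?_ _ _ (hconn u hu w hw)
      rintro a b (⟨x, hx, hta, htb⟩ | ⟨x, hx, hta, htb⟩)
      · refine Or.inl ⟨φ x, ?_, ?_, ?_⟩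
        · exact Finset.mem_coe.mpr (Finset.mem_image_of_mem _ hx)
        · rw [ht x (hJI i hx)]; exact hta
        · rw [hh x (hJI i hx)]; exact htb
      · refine Or.inr ⟨φ x, ?_, ?_, ?_⟩
        · exact Finset.mem_coe.mpr (Finset.mem_image_of_mem _ hx)
        · rw [ht x (hJI i hx)]; exact hta
        · rw [hh x (hJI i hx)]; exact htb
    · rw [Finset.card_image_of_injOn (hinj.mono (fun x hx => hJI i hx)), hspan]
      exact hcard
  · intro v
    rw [hfR, ← hdeg v]
    symm
    apply Finset.card_bij (fun x _ => φ x)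
    · intro x hx
      rw [Finset.mem_filter] at hx ⊢
      refine ⟨Finset.mem_image_of_mem _ hx.1, ?_⟩
      rw [ht x hx.1]; exact hx.2
    · intro x hx y hy hxy
      rw [Finset.mem_filter] at hx hy
      exact hinj hx.1 hy.1 hxy
    · intro y hy
      rw [Finset.mem_filter] at hy
      obtain ⟨x, hx, rfl⟩ := Finset.mem_image.mp hy.1
      refine ⟨x, Finset.mem_filter.mpr ⟨hx, ?_⟩, rfl⟩
      rw [← ht x hx]; exact hy.2
  · have hemp : (Finset.filter (fun e => starTail tE' S f e = none) (I.image φ)) = ∅ := by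
      rw [Finset.filter_eq_empty_iff]
      intro y hy
      obtain ⟨x, hx, rfl⟩ := Finset.mem_image.mp hy
      rw [ht x hx]
      intro hcon
      have hmem : x ∈ Finset.filter (fun e => starTail tE S f e = none) I :=
        Finset.mem_filter.mpr ⟨hx, hcon⟩
      rw [Finset.card_eq_zero] at hnone
      rw [hnone] at hmem
      exact absurd hmem (Finset.notMem_empty x)
    rw [hemp]
    rfl

lemma card_TreeIdx (S : Finset V) (f : V → ℕ) :
    Fintype.card (TreeIdx S f) = ∑ s ∈ S, f s := by
  have h : Fintype.card (TreeIdx S f) =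
      Fintype.card (Σ s : {x : V // x ∈ S}, Fin (f s.1)) :=
    Fintype.card_congr (Equiv.refl _)
  rw [h, Fintype.card_sigma]
  simp only [Fintype.card_fin]
  exact Finset.sum_coe_sort S f

end Helpers

/-- for `(S,f)`-proper `D`, assuming the Kamiyama–Katoh–Takizawa
theorem (for any directed graph `H` on `V` with the same `S`, `f`: a complete
`H*`-intersection exists iff `λ(v,s*;H*) ≥ f(R_H(v))` for all `v`), there exists a
`D*`-rooted connector of size exactly `opt_D` iff there exists a complete
`D_+*`-intersection `I` with `w(I) = opt_D`. -/
theorem stmt12 {V A : Type} [Fintype V] [Fintype A]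
    (tl hd : A → V) (S : Finset V) (f : V → ℕ)
    (hproper : IsProper tl hd S f)
    (opt : ℕ)
    (hopt : (opt : ℤ) = (∑ v : V, (fR tl hd S f v : ℤ)) -
        ((Fintype.card A : ℤ) + ∑ s ∈ S, (f s : ℤ)))
    (KKT : ∀ (E : Type) [Fintype E] (tE hE : E → V),
      (∃ I : Finset (E ⊕ TreeIdx S f), CompleteIntersection tE hE S f I) ↔
      (∀ v : V, LambdaGe (starTail tE S f) (starHead hE S f) (some v) none
        (fR tE hE S f v))) :
    (∃ (n : ℕ) (tB hB : Fin n → V),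
        ParallelTo tl hd tB hB ∧ IsRootedConnector tl hd S f tB hB ∧ n = opt) ↔
      (∃ I : Finset ((A ⊕ A × Fin opt) ⊕ TreeIdx S f),
        CompleteIntersection (Sum.elim tl (fun p => tl p.1))
          (Sum.elim hd (fun p => hd p.1)) S f I ∧
        ∑ e ∈ I, copyWeight e = opt) := by
  classical
  have hsum : ∑ v : V, fR tl hd S f v = Fintype.card A + (∑ s ∈ S, f s) + opt := by
    have h2 : ((∑ v : V, fR tl hd S f v : ℕ) : ℤ)
        = ((Fintype.card A + (∑ s ∈ S, f s) + opt : ℕ) : ℤ) := by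
      push_cast
      push_cast at hopt
      linarith
    exact_mod_cast h2
  have hplus12 : ∀ e : A ⊕ A × Fin opt, ∃ e2 : A,
      tl e2 = Sum.elim tl (fun p => tl p.1) e ∧ hd e2 = Sum.elim hd (fun p => hd p.1) e := by
    rintro (a | p)
    · exact ⟨a, rfl, rfl⟩
    · exact ⟨p.1, rfl, rfl⟩
  have hplus21 : ∀ a : A, ∃ e : A ⊕ A × Fin opt,
      Sum.elim tl (fun p => tl p.1) e = tl a ∧ Sum.elim hd (fun p => hd p.1) e = hd a :=
    fun a => ⟨Sum.inl a, rfl, rfl⟩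
  constructor
  · rintro ⟨n, tB, hB, hpar, hconn, rfl⟩
    choose eb heb1 heb2 using hpar
    have hB12 : ∀ e : A ⊕ Fin n, ∃ e2 : A,
        tl e2 = Sum.elim tl tB e ∧ hd e2 = Sum.elim hd hB e := by
      rintro (a | b)
      · exact ⟨a, rfl, rfl⟩
      · exact ⟨eb b, heb1 b, heb2 b⟩
    have hB21 : ∀ a : A, ∃ e : A ⊕ Fin n,
        Sum.elim tl tB e = tl a ∧ Sum.elim hd hB e = hd a :=
      fun a => ⟨Sum.inl a, rfl, rfl⟩
    have hfRB : ∀ v, fR (Sum.elim tl tB) (Sum.elim hd hB) S f v = fR tl hd S f v :=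
      fR_eq hB12 hB21 S f
    obtain ⟨I₀, hI₀⟩ := (KKT (A ⊕ Fin n) (Sum.elim tl tB) (Sum.elim hd hB)).mpr
      (fun v => by rw [hfRB v]; exact hconn v)
    have hcard : I₀.card = ∑ v : V, fR tl hd S f v := by
      have h1 := Finset.card_eq_sum_card_fiberwise
        (f := starTail (Sum.elim tl tB) S f) (s := I₀) (t := Finset.univ)
        (fun x _ => Finset.mem_univ _)
      rw [h1, Fintype.sum_option, hI₀.2.2, zero_add]
      exact Finset.sum_congr rfl fun v _ => by rw [hI₀.2.1 v, hfRB v]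
    have htot : Fintype.card ((A ⊕ Fin n) ⊕ TreeIdx S f)
        = Fintype.card A + (∑ s ∈ S, f s) + n := by
      rw [Fintype.card_sum, Fintype.card_sum, Fintype.card_fin, card_TreeIdx]
      omega
    have huniv : I₀ = Finset.univ :=
      Finset.eq_univ_of_card _ (by rw [hcard, hsum, htot])
    let cnt : Fin n → ℕ := fun b => (Finset.univ.filter fun b' => eb b' = eb b ∧ b' < b).card
    have hcnt_lt : ∀ b, cnt b < n := by
      intro b
      have hsub : (Finset.univ.filter fun b' => eb b' = eb b ∧ b' < b)
          ⊆ Finset.univ.erase b := by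
        intro b' hb'
        rw [Finset.mem_filter] at hb'
        exact Finset.mem_erase.mpr ⟨ne_of_lt hb'.2.2, Finset.mem_univ _⟩
      calc cnt b ≤ (Finset.univ.erase b).card := Finset.card_le_card hsub
        _ = n - 1 := by
            rw [Finset.card_erase_of_mem (Finset.mem_univ b), Finset.card_univ,
              Fintype.card_fin]
        _ < n := Nat.sub_lt b.pos one_pos
    have hbinj : ∀ b b' : Fin n, eb b = eb b' → cnt b = cnt b' → b = b' := by
      have key : ∀ c c' : Fin n, eb c = eb c' → c < c' → cnt c < cnt c' := by
        intro c c' he' hlt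
        apply Finset.card_lt_card
        have hsub : (Finset.univ.filter fun b' => eb b' = eb c ∧ b' < c)
            ⊆ (Finset.univ.filter fun b' => eb b' = eb c' ∧ b' < c') := by
          intro x hx
          rw [Finset.mem_filter] at hx ⊢
          exact ⟨Finset.mem_univ _, hx.2.1.trans he', hx.2.2.trans hlt⟩
        rw [Finset.ssubset_iff_of_subset hsub]
        refine ⟨c, Finset.mem_filter.mpr ⟨Finset.mem_univ _, he', hlt⟩, fun hmem => ?_⟩
        exact absurd (Finset.mem_filter.mp hmem).2.2 (lt_irrefl c)
      intro b b' he hc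
      by_contra hne
      rcases lt_or_gt_of_ne hne with h | h
      · exact absurd hc (Nat.ne_of_lt (key b b' he h))
      · exact absurd hc.symm (Nat.ne_of_lt (key b' b he.symm h))
    let φ : (A ⊕ Fin n) ⊕ TreeIdx S f → (A ⊕ A × Fin n) ⊕ TreeIdx S f :=
      Sum.elim (Sum.elim (fun a => Sum.inl (Sum.inl a))
        (fun b => Sum.inl (Sum.inr (eb b, ⟨cnt b, hcnt_lt b⟩)))) (fun t => Sum.inr t)
    have hφinj : Function.Injective φ := by
      rintro (⟨a | b⟩ | t) (⟨a' | b'⟩ | t') h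
      · simp only [φ, Sum.elim_inl, Sum.inl.injEq] at h
        rw [h]

      · simp [φ] at h
      · simp [φ] at h
      · simp [φ] at h
      · simp only [φ, Sum.elim_inl, Sum.elim_inr, Sum.inl.injEq, Sum.inr.injEq,
          Prod.mk.injEq, Fin.mk.injEq] at h
        rw [hbinj b b' h.1 h.2]
      · simp [φ] at h
      · simp [φ] at h
      · simp [φ] at h
      · simp only [φ, Sum.elim_inr, Sum.inr.injEq] at h
        rw [h]
    have hφt : ∀ x, starTail (Sum.elim tl (fun p => tl p.1)) S f (φ x)
        = starTail (Sum.elim tl tB) S f x := by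
      rintro (⟨a | b⟩ | t)
      · rfl
      · show some (tl (eb b)) = some (tB b)
        rw [heb1 b]
      · rfl
    have hφh : ∀ x, starHead (Sum.elim hd (fun p => hd p.1)) S f (φ x)
        = starHead (Sum.elim hd hB) S f x := by
      rintro (⟨a | b⟩ | t)
      · rfl
      · show some (hd (eb b)) = some (hB b)
        rw [heb2 b]
      · rfl
    have hspan : ∀ s : V,
        starSpan (Sum.elim tl (fun p : A × Fin n => tl p.1))
          (Sum.elim hd (fun p : A × Fin n => hd p.1)) s
        = starSpan (Sum.elim tl tB) (Sum.elim hd hB) s := by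
      intro s
      rw [starSpan_eq hplus12 hplus21 s]
      exact (starSpan_eq hB12 hB21 s).symm
    have hfR2 : ∀ v,
        fR (Sum.elim tl (fun p : A × Fin n => tl p.1))
          (Sum.elim hd (fun p : A × Fin n => hd p.1)) S f v
        = fR (Sum.elim tl tB) (Sum.elim hd hB) S f v := by
      intro v
      rw [fR_eq hplus12 hplus21 S f v]
      exact (fR_eq hB12 hB21 S f v).symm
    refine ⟨I₀.image φ, ?_, ?_⟩
    · have htr := transfer S f _ _ _ _ φ I₀ hφinj.injOn
        (fun x _ => hφt x) (fun x _ => hφh x) hspan hfR2 hI₀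
      convert htr using 2
    rw [Finset.sum_image (fun x _ y _ h => hφinj h), huniv]
    have hcw : ∀ x : (A ⊕ Fin n) ⊕ TreeIdx S f, copyWeight (φ x)
        = Sum.elim (Sum.elim (fun _ => 0) (fun _ => 1)) (fun _ => 0) x := by
      rintro (⟨a | b⟩ | t) <;> rfl
    rw [Finset.sum_congr rfl fun x _ => hcw x]
    rw [show (∑ x ∈ (Finset.univ : Finset ((A ⊕ Fin n) ⊕ TreeIdx S f)),
        Sum.elim (Sum.elim (fun _ => 0) (fun _ => 1)) (fun _ => 0) x)
        = ∑ x : (A ⊕ Fin n) ⊕ TreeIdx S f,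
            Sum.elim (Sum.elim (fun _ => (0:ℕ)) (fun _ => 1)) (fun _ => 0) x from rfl]
    rw [Fintype.sum_sum_type, Fintype.sum_sum_type]
    simp
  · rintro ⟨I, hCI, hw⟩
    have hwc : ∑ e ∈ I, copyWeight e
        = (I.filter fun e => ∃ p : A × Fin opt, e = Sum.inl (Sum.inr p)).card := by
      rw [Finset.card_filter]
      refine Finset.sum_congr rfl ?_
      rintro (⟨a | p⟩ | t) _
      · simp [copyWeight]
      · simp [copyWeight]
      · simp [copyWeight]
    set C := I.filter (fun e => ∃ p : A × Fin opt, e = Sum.inl (Sum.inr p)) with hCdef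
    have hC : C.card = opt := by rw [← hwc, hw]
    let g : Fin opt ≃ {x // x ∈ C} := (finCongr hC.symm).trans C.equivFin.symm
    have hgcopy : ∀ b : Fin opt,
        ∃ p : A × Fin opt, ((g b : {x // x ∈ C}) : ((A ⊕ A × Fin opt) ⊕ TreeIdx S f))
          = Sum.inl (Sum.inr p) :=
      fun b => (Finset.mem_filter.mp (g b).2).2
    choose pc hpc using hgcopy
    let tB : Fin opt → V := fun b => tl (pc b).1
    let hB : Fin opt → V := fun b => hd (pc b).1
    have hB12 : ∀ e : A ⊕ Fin opt, ∃ e2 : A,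
        tl e2 = Sum.elim tl tB e ∧ hd e2 = Sum.elim hd hB e := by
      rintro (a | b)
      · exact ⟨a, rfl, rfl⟩
      · exact ⟨(pc b).1, rfl, rfl⟩
    have hB21 : ∀ a : A, ∃ e : A ⊕ Fin opt,
        Sum.elim tl tB e = tl a ∧ Sum.elim hd hB e = hd a :=
      fun a => ⟨Sum.inl a, rfl, rfl⟩
    have hfRB : ∀ v, fR (Sum.elim tl tB) (Sum.elim hd hB) S f v = fR tl hd S f v :=
      fR_eq hB12 hB21 S f
    let φ' : (A ⊕ A × Fin opt) ⊕ TreeIdx S f → (A ⊕ Fin opt) ⊕ TreeIdx S f :=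
      fun x =>
        if h : x ∈ C then Sum.inl (Sum.inr (g.symm ⟨x, h⟩))
        else match x with
          | Sum.inl (Sum.inl a) => Sum.inl (Sum.inl a)
          | Sum.inl (Sum.inr p) => Sum.inl (Sum.inl p.1)
          | Sum.inr t => Sum.inr t
    have hval : ∀ (x : (A ⊕ A × Fin opt) ⊕ TreeIdx S f) (h : x ∈ C),
        x = Sum.inl (Sum.inr (pc (g.symm ⟨x, h⟩))) := by
      intro x h
      have hb : ((g (g.symm ⟨x, h⟩) : {x // x ∈ C})
          : ((A ⊕ A × Fin opt) ⊕ TreeIdx S f)) = x := by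
        rw [Equiv.apply_symm_apply]
      rw [← hpc (g.symm ⟨x, h⟩), hb]
    have hinj' : Set.InjOn φ' ↑I := by
      intro x hx y hy hxy
      rw [Finset.mem_coe] at hx hy
      by_cases h1 : x ∈ C <;> by_cases h2 : y ∈ C
      · simp only [φ', dif_pos h1, dif_pos h2, Sum.inl.injEq, Sum.inr.injEq] at hxy
        have h3 := congrArg (fun z => ((g z : {x // x ∈ C})
          : ((A ⊕ A × Fin opt) ⊕ TreeIdx S f))) hxy
        simpa [Equiv.apply_symm_apply] using h3
      · exfalso
        rcases y with (a | p) | t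
        · simp [φ', dif_pos h1, dif_neg h2] at hxy
        · exact h2 (Finset.mem_filter.mpr ⟨hy, ⟨p, rfl⟩⟩)
        · simp [φ', dif_pos h1, dif_neg h2] at hxy
      · exfalso
        rcases x with (a | p) | t
        · simp [φ', dif_neg h1, dif_pos h2] at hxy
        · exact h1 (Finset.mem_filter.mpr ⟨hx, ⟨p, rfl⟩⟩)
        · simp [φ', dif_neg h1, dif_pos h2] at hxy
      · rcases x with (a | p) | t <;> rcases y with (a' | p') | t'
        · simpa [φ', dif_neg h1, dif_neg h2] using hxy
        · exact absurd (Finset.mem_filter.mpr ⟨hy, ⟨p', rfl⟩⟩) h2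
        · simp [φ', dif_neg h1, dif_neg h2] at hxy
        · exact absurd (Finset.mem_filter.mpr ⟨hx, ⟨p, rfl⟩⟩) h1
        · exact absurd (Finset.mem_filter.mpr ⟨hx, ⟨p, rfl⟩⟩) h1
        · exact absurd (Finset.mem_filter.mpr ⟨hx, ⟨p, rfl⟩⟩) h1
        · simp [φ', dif_neg h1, dif_neg h2] at hxy
        · exact absurd (Finset.mem_filter.mpr ⟨hy, ⟨p', rfl⟩⟩) h2
        · simpa [φ', dif_neg h1, dif_neg h2] using hxy
    have ht' : ∀ x ∈ I, starTail (Sum.elim tl tB) S f (φ' x)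
        = starTail (Sum.elim tl (fun p : A × Fin opt => tl p.1)) S f x := by
      intro x hx
      by_cases h : x ∈ C
      · simp only [φ', dif_pos h]
        conv_rhs => rw [hval x h]
        rfl
      · rcases x with (a | p) | t
        · simp only [φ', dif_neg h]
          rfl
        · exact absurd (Finset.mem_filter.mpr ⟨hx, ⟨p, rfl⟩⟩) h
        · simp only [φ', dif_neg h]
          rfl
    have hh' : ∀ x ∈ I, starHead (Sum.elim hd hB) S f (φ' x)
        = starHead (Sum.elim hd (fun p : A × Fin opt => hd p.1)) S f x := by
      intro x hx
      by_cases h : x ∈ C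
      · simp only [φ', dif_pos h]
        conv_rhs => rw [hval x h]
        rfl
      · rcases x with (a | p) | t
        · simp only [φ', dif_neg h]
          rfl
        · exact absurd (Finset.mem_filter.mpr ⟨hx, ⟨p, rfl⟩⟩) h
        · simp only [φ', dif_neg h]
          rfl
    have hspan' : ∀ s : V,
        starSpan (Sum.elim tl tB) (Sum.elim hd hB) s
        = starSpan (Sum.elim tl (fun p : A × Fin opt => tl p.1))
            (Sum.elim hd (fun p : A × Fin opt => hd p.1)) s := by
      intro s
      rw [starSpan_eq hB12 hB21 s]
      exact (starSpan_eq hplus12 hplus21 s).symm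
    have hfR' : ∀ v,
        fR (Sum.elim tl tB) (Sum.elim hd hB) S f v
        = fR (Sum.elim tl (fun p : A × Fin opt => tl p.1))
            (Sum.elim hd (fun p : A × Fin opt => hd p.1)) S f v := by
      intro v
      rw [fR_eq hB12 hB21 S f v]
      exact (fR_eq hplus12 hplus21 S f v).symm
    have hCI' := transfer S f _ _ (Sum.elim tl tB) (Sum.elim hd hB) φ' I
      hinj' ht' hh' hspan' hfR' hCI
    have hlam := (KKT (A ⊕ Fin opt) (Sum.elim tl tB) (Sum.elim hd hB)).mp ⟨_, hCI'⟩
    refine ⟨opt, tB, hB, fun b => ⟨(pc b).1, rfl, rfl⟩, ?_, rfl⟩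
    intro v
    have hv := hlam v
    rwa [hfRB v] at hv
end

section
/- Let D=(V,A) be an acyclic directed graph with S ⊆ V and f: S → ℤ≥0. Then there exists a D-canonical set of in-trees covering A if and only if for every vertex v ∈ V and every subset B ⊆ δ_D(v), |B| ≤ f(R_D(∂^+(B))), where ∂^+(B) is the set of heads of arcs in B and R_D(∂^+(B)) = ∪_{u ∈ ∂^+(B)} R_D(u). -/
open Finset

attribute [local instance] Classical.propDecidable

universe u v

/-- `D` has no directed cycle. -/
def Acyclic {V A : Type} (tl hd : A → V) : Prop :=
  ∀ u w : V, ArcStep tl hd Set.univ u w → ¬ ArcReach tl hd Set.univ w u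

/-- Auxiliary: cardinality of the set of tree indices whose root satisfies `P`. -/
lemma treeIdx_card {V : Type} (S : Finset V) (f : V → ℕ) (P : V → Prop)
    [DecidablePred P] :
    ((Finset.univ : Finset (TreeIdx S f)).filter (fun i => P i.1.1)).card
      = ∑ s ∈ S.filter P, f s := by
  classical
  rw [← Fintype.card_subtype]
  have e : {i : TreeIdx S f // P i.1.1} ≃ Σ s : {x : V // x ∈ S.filter P}, Fin (f s.1) :=
    { toFun := fun i => ⟨⟨i.1.1.1, Finset.mem_filter.2 ⟨i.1.1.2, i.2⟩⟩, i.1.2⟩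
      invFun := fun p => ⟨⟨⟨p.1.1, (Finset.mem_filter.1 p.1.2).1⟩, p.2⟩,
        (Finset.mem_filter.1 p.1.2).2⟩
      left_inv := fun i => rfl
      right_inv := fun p => rfl }
  rw [Fintype.card_congr e, Fintype.card_sigma]
  rw [← Finset.sum_coe_sort (S.filter P) f]
  simp

/-- Auxiliary: the successor relation of an acyclic digraph is well-founded. -/
lemma acyclic_wf {V A : Type} [Fintype V] (tl hd : A → V) (hacyc : Acyclic tl hd) :
    WellFounded (fun x y : V => ArcStep tl hd Set.univ y x) := by
  set r : V → V → Prop := fun x y => ArcStep tl hd Set.univ y x with hr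
  have hirr : ∀ a : V, ¬ Relation.TransGen r a a := by
    intro a h
    rcases Relation.TransGen.head'_iff.1 h with ⟨c, h1, h2⟩
    exact hacyc c a h1 (Relation.reflTransGen_swap.1 h2)
  have hwf : WellFounded (Relation.TransGen r) := by
    haveI : IsTrans V (Relation.TransGen r) := ⟨fun _ _ _ => Relation.TransGen.trans⟩
    haveI : IsIrrefl V (Relation.TransGen r) := ⟨hirr⟩
    exact Finite.wellFounded_of_trans_of_irrefl _
  exact Subrelation.wf (fun h => Relation.TransGen.single h) hwf

/-- Auxiliary: a vertex strictly reaching `s` has an outgoing arc whose head reaches `s`. -/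
lemma exists_first_arc {V A : Type} (tl hd : A → V) {v s : V}
    (h : ArcReach tl hd Set.univ v s) (hne : v ≠ s) :
    ∃ e : A, tl e = v ∧ ArcReach tl hd Set.univ (hd e) s := by
  rcases Relation.ReflTransGen.cases_head h with h1 | ⟨c, ⟨e, _, he1, he2⟩, h2⟩
  · exact absurd h1 hne
  · exact ⟨e, he1, he2 ▸ h2⟩

/-- Auxiliary: the hard (sufficiency) direction of Statement 13. -/
lemma stmt13_backward {V A : Type} [Fintype V] [Fintype A]
    (tl hd : A → V) (S : Finset V) (f : V → ℕ) (hacyc : Acyclic tl hd)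
    (hcond : ∀ (v : V) (B : Finset A), (∀ e ∈ B, tl e = v) →
        B.card ≤ ∑ s ∈ S.filter
          (fun s => ∃ e ∈ B, ArcReach tl hd Set.univ (hd e) s), f s) :
    ∃ T : TreeIdx S f → Finset A, IsCanonical tl hd S f T ∧ CoversAll T := by
  classical
  -- Hall's theorem, applied at each vertex separately.
  have hall : ∀ v : V, ∃ G : {e : A // tl e = v} → TreeIdx S f, Function.Injective G ∧
      ∀ x, ArcReach tl hd Set.univ (hd x.1) ((G x).1.1) := by
    intro v
    have hcard : ∀ B : Finset {e : A // tl e = v}, B.card ≤ (B.biUnion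
        (fun x : {e : A // tl e = v} =>
          Finset.univ.filter (fun i : TreeIdx S f =>
            ArcReach tl hd Set.univ (hd x.1) i.1.1))).card := by
      intro B
      have hb : (B.biUnion (fun x : {e : A // tl e = v} =>
          Finset.univ.filter (fun i : TreeIdx S f =>
            ArcReach tl hd Set.univ (hd x.1) i.1.1)))
          = Finset.univ.filter
            (fun i : TreeIdx S f => ∃ x ∈ B, ArcReach tl hd Set.univ (hd x.1) i.1.1) := by
        ext i
        simp [Finset.mem_biUnion, Finset.mem_filter]
      rw [hb]
      have htail : ∀ e ∈ B.image Subtype.val, tl e = v := by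
        intro e he
        rcases Finset.mem_image.1 he with ⟨x, _, rfl⟩
        exact x.2
      have h1 := hcond v (B.image Subtype.val) htail
      rw [Finset.card_image_of_injective _ Subtype.val_injective] at h1
      have hfil : S.filter
            (fun s => ∃ e ∈ B.image Subtype.val, ArcReach tl hd Set.univ (hd e) s)
          = S.filter (fun s => ∃ x ∈ B, ArcReach tl hd Set.univ (hd x.1) s) := by
        ext s
        simp only [Finset.mem_filter, Finset.mem_image]
        constructor
        · rintro ⟨hs, e, ⟨x, hx, rfl⟩, hre⟩
          exact ⟨hs, x, hx, hre⟩
        · rintro ⟨hs, x, hx, hre⟩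
          exact ⟨hs, x.1, ⟨x, hx, rfl⟩, hre⟩
      rw [hfil] at h1
      exact le_trans h1 (treeIdx_card S f
        (fun s => ∃ x ∈ B, ArcReach tl hd Set.univ (hd x.1) s)).ge
    obtain ⟨G, hGinj, hGmem⟩ := (Finset.all_card_le_biUnion_card_iff_exists_injective
      (fun x : {e : A // tl e = v} =>
        Finset.univ.filter (fun i : TreeIdx S f =>
          ArcReach tl hd Set.univ (hd x.1) i.1.1))).mp hcard
    exact ⟨G, hGinj, fun x => (Finset.mem_filter.1 (hGmem x)).2⟩
  choose G hGinj hGmem using hall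
  let g : A → TreeIdx S f := fun e => G (tl e) ⟨e, rfl⟩
  have geq : ∀ (e : A) (v : V) (h : tl e = v), g e = G v ⟨e, h⟩ := by
    intro e v h; subst h; rfl
  have ginj : ∀ e e', tl e = tl e' → g e = g e' → e = e' := by
    intro e e' h hg
    have h1 : g e = G (tl e') ⟨e, h⟩ := geq e (tl e') h
    have h2 : g e' = G (tl e') ⟨e', rfl⟩ := rfl
    have h3 : G (tl e') ⟨e, h⟩ = G (tl e') ⟨e', rfl⟩ := by rw [← h1, ← h2, hg]
    have := hGinj (tl e') h3
    exact congrArg Subtype.val this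
  have gmem : ∀ e : A, ArcReach tl hd Set.univ (hd e) ((g e).1.1) :=
    fun e => hGmem (tl e) ⟨e, rfl⟩
  -- the selection function
  let pk : TreeIdx S f → V → Option A := fun i v =>
    if h : ∃ e, tl e = v ∧ g e = i then some h.choose
    else if h' : ∃ e, tl e = v ∧ ArcReach tl hd Set.univ (hd e) i.1.1 then some h'.choose
    else none
  have pk1 : ∀ i v e, pk i v = some e →
      tl e = v ∧ ArcReach tl hd Set.univ (hd e) i.1.1 := by
    intro i v e hpk
    simp only [pk] at hpk
    split_ifs at hpk with h1 h2
    · obtain ⟨ht, hg⟩ := h1.choose_spec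
      have he : h1.choose = e := Option.some.inj hpk
      rw [he] at ht hg
      refine ⟨ht, ?_⟩
      rw [← hg]
      exact gmem e
    · obtain ⟨ht, hr⟩ := h2.choose_spec
      have he : h2.choose = e := Option.some.inj hpk
      rw [he] at ht hr
      exact ⟨ht, hr⟩
  have pk2 : ∀ (i : TreeIdx S f) v, ArcReach tl hd Set.univ v i.1.1 → v ≠ i.1.1 →
      ∃ e, pk i v = some e := by
    intro i v hv hne
    simp only [pk]
    split_ifs with h1 h2
    · exact ⟨_, rfl⟩
    · exact ⟨_, rfl⟩
    · exact absurd (exists_first_arc tl hd hv hne) h2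
  have pk3 : ∀ e : A, pk (g e) (tl e) = some e := by
    intro e
    have h1 : ∃ e', tl e' = tl e ∧ g e' = g e := ⟨e, rfl, rfl⟩
    simp only [pk]
    rw [dif_pos h1]
    exact congrArg some (ginj _ _ h1.choose_spec.1 h1.choose_spec.2)
  refine ⟨fun i => Finset.univ.filter (fun e => pk i (tl e) = some e), ?_, ?_⟩
  · intro i
    have memT : ∀ e, e ∈ Finset.univ.filter (fun e => pk i (tl e) = some e) ↔
        pk i (tl e) = some e := by
      intro e; simp
    refine ⟨?_, ?_, Relation.ReflTransGen.refl, ?_, ?_, ?_⟩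
    · -- mem_tail
      intro e he
      obtain ⟨ht, hr⟩ := pk1 i (tl e) e ((memT e).1 he)
      exact Relation.ReflTransGen.head ⟨e, trivial, rfl, rfl⟩ hr
    · -- mem_head
      intro e he
      exact (pk1 i (tl e) e ((memT e).1 he)).2
    · -- out_unique
      intro v hv hne
      obtain ⟨e, he⟩ := pk2 i v hv hne
      have ht : tl e = v := (pk1 i v e he).1
      refine ⟨e, ⟨(memT e).2 (by rw [ht]; exact he), ht⟩, ?_⟩
      rintro e' ⟨he', hte'⟩
      have h2 : pk i v = some e' := by rw [← hte']; exact (memT e').1 he'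
      exact Option.some.inj (h2.symm.trans he)
    · -- root_no_out
      intro e he heq
      obtain ⟨ht, hr⟩ := pk1 i (tl e) e ((memT e).1 he)
      exact hacyc (tl e) (hd e) ⟨e, trivial, rfl, rfl⟩ (by rw [heq]; exact hr)
    · -- reaches_root
      intro v hv
      refine (acyclic_wf tl hd hacyc).induction
        (C := fun v => ArcReach tl hd Set.univ v i.1.1 →
          ArcReach tl hd
            (↑(Finset.univ.filter (fun e => pk i (tl e) = some e)) : Set A) v i.1.1)
        v ?_ hv
      intro x IH hx
      by_cases hxs : x = i.1.1
      · subst hxs; exact Relation.ReflTransGen.refl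
      · obtain ⟨e, he⟩ := pk2 i x hx hxs
        obtain ⟨ht, hr⟩ := pk1 i x e he
        have heT : e ∈ Finset.univ.filter (fun e => pk i (tl e) = some e) :=
          (memT e).2 (by rw [ht]; exact he)
        exact Relation.ReflTransGen.head ⟨e, heT, ht, rfl⟩
          (IH (hd e) ⟨e, trivial, ht, rfl⟩ hr)
  · -- coverage
    intro e
    exact ⟨g e, by
      simp only [Finset.mem_filter, Finset.mem_univ, true_and]
      exact pk3 e⟩

/-- for acyclic `D`, a `D`-canonical set of in-trees covering `A`
exists iff for every `v ∈ V` and every `B ⊆ δ_D(v)`, `|B| ≤ f(R_D(∂⁺(B)))`. -/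
theorem stmt13 {V A : Type} [Fintype V] [Fintype A]
    (tl hd : A → V) (S : Finset V) (f : V → ℕ)
    (hacyc : Acyclic tl hd) :
    (∃ T : TreeIdx S f → Finset A, IsCanonical tl hd S f T ∧ CoversAll T) ↔
      (∀ (v : V) (B : Finset A), (∀ e ∈ B, tl e = v) →
        B.card ≤ ∑ s ∈ S.filter
          (fun s => ∃ e ∈ B, ArcReach tl hd Set.univ (hd e) s), f s) := by
  constructor
  · rintro ⟨T, hcan, hcov⟩ v B hB
    classical
    choose idx hidx using hcov
    refine le_trans (Finset.card_le_card_of_injOn idx ?_ ?_)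
      (treeIdx_card S f (fun s => ∃ e ∈ B, ArcReach tl hd Set.univ (hd e) s)).le
    · intro e he
      refine Finset.mem_filter.2 ⟨Finset.mem_univ _, ?_⟩
      exact ⟨e, he, (hcan (idx e)).mem_head e (hidx e)⟩
    · intro e he e' he' hee
      have hte : tl e = v := hB e he
      have hte' : tl e' = v := hB e' he'
      have he'T : e' ∈ T (idx e) := by rw [hee]; exact hidx e'
      have hvspan : v ∈ {u | ArcReach tl hd Set.univ u (idx e).1.1} := by
        rw [← hte]; exact (hcan (idx e)).mem_tail e (hidx e)
      have hne : v ≠ (idx e).1.1 := by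
        rw [← hte]; exact (hcan (idx e)).root_no_out e (hidx e)
      obtain ⟨a, -, ha⟩ := (hcan (idx e)).out_unique v hvspan hne
      rw [ha e ⟨hidx e, hte⟩, ha e' ⟨he'T, hte'⟩]
  · exact stmt13_backward tl hd S f hacyc
end

section
/- Let D=(V,A) be an acyclic directed graph with a topological labeling of V by integers 1..|V| such that every arc's head has smaller label than its tail, and let V_t be the set of vertices with label ≤ t. If for every vertex v, the bipartite graph G_v (as in the matching characterization) has a matching saturating X_v, then for every t, the induced subgraph D[V_t] (with specified vertices S ∩ V_t and f restricted) admits a D[V_t]-canonical set of in-trees covering the arc set of D[V_t]. -/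
open Finset

attribute [local instance] Classical.propDecidable

universe u v

/-- The bipartite graph `G_v` has a matching saturating
`X_v = {x_e : e ∈ δ_D(v)}`: an injection from the arcs with tail `v` to the pairs
`(s, j)` with `s ∈ S` reachable from `v` and `j < f s`, sending each arc `e` to a
pair whose root `s` is reachable from the head of `e`. -/
def HasSaturatingMatching {V A : Type} (tl hd : A → V) (S : Finset V) (f : V → ℕ)
    (v : V) : Prop :=
  ∃ m : {e : A // tl e = v} →
      Σ s : {x : V // x ∈ S ∧ ArcReach tl hd Set.univ v x}, Fin (f s.1),
    Function.Injective m ∧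
    ∀ e : {e : A // tl e = v}, ArcReach tl hd Set.univ (hd e.1) (m e).1.1

section Helpers

variable {V A : Type} (tl hd : A → V) (lab : V → ℕ)

/-- Labels do not increase along directed reachability. -/
lemma lab_le_of_reach (htopo : ∀ e : A, lab (hd e) < lab (tl e)) {v w : V}
    (h : ArcReach tl hd Set.univ v w) : lab w ≤ lab v := by
  induction h with
  | refl => exact le_rfl
  | tail _ step ih =>
    obtain ⟨e, -, hte, hhe⟩ := step
    have := htopo e
    rw [hte, hhe] at this
    exact le_trans (le_of_lt this) ih

lemma sigma_fin_ext {α : Type u} {g : α → ℕ} {a b : Σ x : α, Fin (g x)}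
    (h1 : a.1 = b.1) (h2 : (a.2 : ℕ) = (b.2 : ℕ)) : a = b := by
  obtain ⟨x, j⟩ := a
  obtain ⟨y, k⟩ := b
  cases h1
  exact congrArg _ (Fin.ext h2)

/-- Reachability in `D` between vertices of `V_t` transfers to `D[V_t]`. -/
lemma reach_down (htopo : ∀ e : A, lab (hd e) < lab (tl e)) (t : ℕ) {v w : V}
    (hv : lab v ≤ t) (h : ArcReach tl hd Set.univ v w) :
    ∀ (hw : lab w ≤ t),
      ArcReach (fun e : {e : A // lab (tl e) ≤ t ∧ lab (hd e) ≤ t} =>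
          (⟨tl e.1, e.2.1⟩ : {v : V // lab v ≤ t}))
        (fun e => (⟨hd e.1, e.2.2⟩ : {v : V // lab v ≤ t}))
        Set.univ ⟨v, hv⟩ ⟨w, hw⟩ := by
  induction h with
  | refl => intro hw; exact Relation.ReflTransGen.refl
  | @tail b c h1 step ih =>
    intro hc
    obtain ⟨e, -, hte, hhe⟩ := step
    have hb : lab b ≤ t := le_trans (lab_le_of_reach tl hd lab htopo h1) hv
    refine (ih hb).tail ⟨⟨e, ?_, ?_⟩, Set.mem_univ _, ?_, ?_⟩
    · rw [hte]; exact hb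
    · rw [hhe]; exact hc
    · exact Subtype.ext hte
    · exact Subtype.ext hhe

/-- Reachability in `D[V_t]` transfers up to `D`. -/
lemma reach_up (t : ℕ) {v w : {v : V // lab v ≤ t}}
    (h : ArcReach (fun e : {e : A // lab (tl e) ≤ t ∧ lab (hd e) ≤ t} =>
          (⟨tl e.1, e.2.1⟩ : {v : V // lab v ≤ t}))
        (fun e => (⟨hd e.1, e.2.2⟩ : {v : V // lab v ≤ t}))
        Set.univ v w) :
    ArcReach tl hd Set.univ v.1 w.1 := by
  induction h with
  | refl => exact Relation.ReflTransGen.refl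
  | tail _ step ih =>
    obtain ⟨e, -, hte, hhe⟩ := step
    exact ih.tail ⟨e.1, Set.mem_univ _, congrArg Subtype.val hte,
      congrArg Subtype.val hhe⟩

variable (S : Finset V) (f : V → ℕ)

/-- Canonical choice of the outgoing arc of `v` in the tree indexed by root `r`
and copy number `j`. -/
noncomputable def pickArc
    (m : ∀ v : V, {e : A // tl e = v} →
      Σ s : {x : V // x ∈ S ∧ ArcReach tl hd Set.univ v x}, Fin (f s.1))
    (r : V) (j : ℕ) (v : V) : Option A :=
  if h1 : ∃ e : {e : A // tl e = v},
      (m v e).1.1 = r ∧ ((m v e).2 : ℕ) = j then some h1.choose.1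
  else if h2 : ∃ e : A, tl e = v ∧ ArcReach tl hd Set.univ (hd e) r then
    some h2.choose
  else none

lemma pickArc_matched
    {m : ∀ v : V, {e : A // tl e = v} →
      Σ s : {x : V // x ∈ S ∧ ArcReach tl hd Set.univ v x}, Fin (f s.1)}
    {v r : V} {j : ℕ} {e : {e : A // tl e = v}}
    (hminj : Function.Injective (m v))
    (he : (m v e).1.1 = r ∧ ((m v e).2 : ℕ) = j) :
    pickArc tl hd S f m r j v = some e.1 := by
  have h1 : ∃ e : {e : A // tl e = v},
      (m v e).1.1 = r ∧ ((m v e).2 : ℕ) = j := ⟨e, he⟩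
  unfold pickArc
  rw [dif_pos h1]
  have hspec := h1.choose_spec
  have hmeq : m v h1.choose = m v e := by
    apply sigma_fin_ext
    · exact Subtype.ext (hspec.1.trans he.1.symm)
    · exact hspec.2.trans he.2.symm
  rw [hminj hmeq]

lemma pickArc_spec
    {m : ∀ v : V, {e : A // tl e = v} →
      Σ s : {x : V // x ∈ S ∧ ArcReach tl hd Set.univ v x}, Fin (f s.1)}
    (hmr : ∀ v (e : {e : A // tl e = v}),
      ArcReach tl hd Set.univ (hd e.1) (m v e).1.1)
    {v r : V} (hne : v ≠ r) (hreach : ArcReach tl hd Set.univ v r) (j : ℕ) :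
    ∃ e : A, pickArc tl hd S f m r j v = some e ∧ tl e = v ∧
      ArcReach tl hd Set.univ (hd e) r := by
  unfold pickArc
  split_ifs with h1 h2
  · refine ⟨h1.choose.1, rfl, h1.choose.2, ?_⟩
    have := hmr v h1.choose
    rwa [h1.choose_spec.1] at this
  · exact ⟨h2.choose, rfl, h2.choose_spec.1, h2.choose_spec.2⟩
  · exfalso
    apply h2
    rcases Relation.ReflTransGen.cases_head hreach with rfl | ⟨c, ⟨e, -, hte, hhe⟩, hcr⟩
    · exact absurd rfl hne
    · exact ⟨e, hte, hhe ▸ hcr⟩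

end Helpers

/-- `D` acyclic with a topological labeling `ℓ : V → {1,…,|V|}`
(head labels smaller than tail labels). If every `G_v` has a matching saturating
`X_v`, then for every `t`, the induced subgraph `D[V_t]` on the vertices of label
`≤ t` (with specified vertices `S ∩ V_t` and `f` restricted) admits a
`D[V_t]`-canonical set of in-trees covering its arc set. -/
theorem stmt16 {V A : Type} [Fintype V] [Fintype A]
    (tl hd : A → V) (S : Finset V) (f : V → ℕ)
    (lab : V → ℕ) (hinj : Function.Injective lab)
    (hrange : ∀ v : V, 1 ≤ lab v ∧ lab v ≤ Fintype.card V)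
    (htopo : ∀ e : A, lab (hd e) < lab (tl e))
    (hmatch : ∀ v : V, HasSaturatingMatching tl hd S f v) :
    ∀ t : ℕ,
      ∃ T : TreeIdx (S.subtype fun v => lab v ≤ t) (fun v => f v.1) →
          Finset {e : A // lab (tl e) ≤ t ∧ lab (hd e) ≤ t},
        IsCanonical
          (fun e => (⟨tl e.1, e.2.1⟩ : {v : V // lab v ≤ t}))
          (fun e => (⟨hd e.1, e.2.2⟩ : {v : V // lab v ≤ t}))
          (S.subtype fun v => lab v ≤ t) (fun v => f v.1) T ∧
        CoversAll T := by
  intro t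
  choose m hminj hmr using hmatch
  refine ⟨fun i => Finset.univ.filter
      (fun e : {e : A // lab (tl e) ≤ t ∧ lab (hd e) ≤ t} =>
        ArcReach tl hd Set.univ (tl e.1) i.1.1.1 ∧ tl e.1 ≠ i.1.1.1 ∧
        pickArc tl hd S f m i.1.1.1 (i.2 : ℕ) (tl e.1) = some e.1), ?_, ?_⟩
  · -- IsCanonical
    intro i
    have hrt : lab i.1.1.1 ≤ t := i.1.1.2
    have spanUp : ∀ v : {v : V // lab v ≤ t},
        ArcReach (fun e : {e : A // lab (tl e) ≤ t ∧ lab (hd e) ≤ t} =>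
            (⟨tl e.1, e.2.1⟩ : {v : V // lab v ≤ t}))
          (fun e => (⟨hd e.1, e.2.2⟩ : {v : V // lab v ≤ t}))
          Set.univ v i.1.1 →
        ArcReach tl hd Set.univ v.1 i.1.1.1 :=
      fun v h => reach_up tl hd lab t h
    have spanDown : ∀ v : {v : V // lab v ≤ t},
        ArcReach tl hd Set.univ v.1 i.1.1.1 →
        ArcReach (fun e : {e : A // lab (tl e) ≤ t ∧ lab (hd e) ≤ t} =>
            (⟨tl e.1, e.2.1⟩ : {v : V // lab v ≤ t}))
          (fun e => (⟨hd e.1, e.2.2⟩ : {v : V // lab v ≤ t}))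
          Set.univ v i.1.1 :=
      fun v h => reach_down tl hd lab htopo t v.2 h hrt
    constructor
    · -- mem_tail
      intro e he
      simp only [Finset.mem_filter] at he
      exact spanDown ⟨tl e.1, e.2.1⟩ he.2.1
    · -- mem_head
      intro e he
      simp only [Finset.mem_filter] at he
      obtain ⟨e0, hp, ht0, hr0⟩ :=
        pickArc_spec tl hd S f hmr he.2.2.1 he.2.1 (i.2 : ℕ)
      have he0 : e0 = e.1 := Option.some.inj (hp.symm.trans he.2.2.2)
      rw [he0] at hr0
      exact spanDown ⟨hd e.1, e.2.2⟩ hr0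
    · -- root_mem
      exact spanDown i.1.1 Relation.ReflTransGen.refl
    · -- out_unique
      intro v hv hne
      have hreach : ArcReach tl hd Set.univ v.1 i.1.1.1 := spanUp v hv
      have hne' : v.1 ≠ i.1.1.1 := fun h => hne (Subtype.ext h)
      obtain ⟨e0, hp, ht0, hr0⟩ := pickArc_spec tl hd S f hmr hne' hreach (i.2 : ℕ)
      have hl1 : lab (tl e0) ≤ t := by rw [ht0]; exact v.2
      have hl2 : lab (hd e0) ≤ t := le_trans (le_of_lt (htopo e0)) hl1
      refine ⟨⟨e0, hl1, hl2⟩, ⟨?_, Subtype.ext ht0⟩, ?_⟩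
      · simp only [Finset.mem_filter, Finset.mem_univ, true_and, ht0]
        exact ⟨hreach, hne', hp⟩
      · rintro e1 ⟨h1mem, h1tl⟩
        simp only [Finset.mem_filter] at h1mem
        have h1tl' : tl e1.1 = v.1 := congrArg Subtype.val h1tl
        have : some e1.1 = some e0 := by
          rw [← h1mem.2.2.2, h1tl', hp]
        exact Subtype.ext (Option.some.inj this)
    · -- root_no_out
      intro e he heq
      simp only [Finset.mem_filter] at he
      exact he.2.2.1 (congrArg Subtype.val heq)
    · -- reaches_root
      have key : ∀ n : ℕ, ∀ v : {v : V // lab v ≤ t}, lab v.1 ≤ n →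
          ArcReach tl hd Set.univ v.1 i.1.1.1 →
          ArcReach (fun e : {e : A // lab (tl e) ≤ t ∧ lab (hd e) ≤ t} =>
              (⟨tl e.1, e.2.1⟩ : {v : V // lab v ≤ t}))
            (fun e => (⟨hd e.1, e.2.2⟩ : {v : V // lab v ≤ t}))
            (↑(Finset.univ.filter
              (fun e : {e : A // lab (tl e) ≤ t ∧ lab (hd e) ≤ t} =>
                ArcReach tl hd Set.univ (tl e.1) i.1.1.1 ∧ tl e.1 ≠ i.1.1.1 ∧
                pickArc tl hd S f m i.1.1.1 (i.2 : ℕ) (tl e.1) = some e.1)) :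
              Set _) v i.1.1 := by
        intro n
        induction n using Nat.strong_induction_on with
        | _ n ih =>
          intro v hvn hreach
          by_cases hv : v.1 = i.1.1.1
          · have hveq : v = i.1.1 := Subtype.ext hv
            rw [hveq]
            exact Relation.ReflTransGen.refl
          · obtain ⟨e0, hp, ht0, hr0⟩ :=
              pickArc_spec tl hd S f hmr hv hreach (i.2 : ℕ)
            have hlt : lab (hd e0) < lab v.1 := by
              rw [← ht0]; exact htopo e0
            have hl1 : lab (tl e0) ≤ t := by rw [ht0]; exact v.2
            have hl2 : lab (hd e0) ≤ t := le_trans (le_of_lt hlt) v.2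
            have hmem : (⟨e0, hl1, hl2⟩ :
                {e : A // lab (tl e) ≤ t ∧ lab (hd e) ≤ t}) ∈
                Finset.univ.filter
                  (fun e : {e : A // lab (tl e) ≤ t ∧ lab (hd e) ≤ t} =>
                    ArcReach tl hd Set.univ (tl e.1) i.1.1.1 ∧
                    tl e.1 ≠ i.1.1.1 ∧
                    pickArc tl hd S f m i.1.1.1 (i.2 : ℕ) (tl e.1) = some e.1) := by
              simp only [Finset.mem_filter, Finset.mem_univ, true_and, ht0]
              exact ⟨hreach, hv, hp⟩
            have hw := ih (lab (hd e0)) (lt_of_lt_of_le hlt hvn)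
              ⟨hd e0, hl2⟩ le_rfl hr0
            exact Relation.ReflTransGen.head
              ⟨⟨e0, hl1, hl2⟩, Finset.mem_coe.mpr hmem, Subtype.ext ht0, rfl⟩ hw
      intro v hv
      exact key (lab v.1) v le_rfl (spanUp v hv)
  · -- CoversAll
    intro e
    have hs_reach_hd : ArcReach tl hd Set.univ (hd e.1)
        (m (tl e.1) ⟨e.1, rfl⟩).1.1 := hmr (tl e.1) ⟨e.1, rfl⟩
    have hls : lab (m (tl e.1) ⟨e.1, rfl⟩).1.1 ≤ t :=
      le_trans (lab_le_of_reach tl hd lab htopo hs_reach_hd) e.2.2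
    refine ⟨⟨⟨⟨(m (tl e.1) ⟨e.1, rfl⟩).1.1, hls⟩,
      Finset.mem_subtype.mpr (m (tl e.1) ⟨e.1, rfl⟩).1.2.1⟩,
      (m (tl e.1) ⟨e.1, rfl⟩).2⟩, ?_⟩
    simp only [Finset.mem_filter, Finset.mem_univ, true_and]
    refine ⟨(m (tl e.1) ⟨e.1, rfl⟩).1.2.2, ?_, ?_⟩
    · intro h
      have h1 : lab (m (tl e.1) ⟨e.1, rfl⟩).1.1 < lab (tl e.1) :=
        lt_of_le_of_lt (lab_le_of_reach tl hd lab htopo hs_reach_hd) (htopo e.1)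
      have h2 := congrArg lab h
      omega
    · exact pickArc_matched tl hd S f (hminj (tl e.1)) ⟨rfl, rfl⟩
end

section
/- Let D=(V,A) be a directed graph with S ⊆ V and f: S → ℤ≥0 where f(s_i) ≥ 1 for some s_i, and suppose D is not (S,f)-proper (i.e., |δ_{D*}(v)| > f(R_D(v)) for some v ∈ V). Then there is no D-canonical set of in-trees covering A. -/
open Finset

attribute [local instance] Classical.propDecidable

universe u v

/-- if some `s ∈ S` has `f s ≥ 1` and `D` is not `(S,f)`-proper
(i.e. `|δ_{D*}(v)| > f(R_D(v))` for some `v`), then there is no `D`-canonical set of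
in-trees covering `A`. -/
theorem stmt19 {V A : Type} [Fintype V] [Fintype A]
    (tl hd : A → V) (S : Finset V) (f : V → ℕ)
    (hf : ∃ s ∈ S, 1 ≤ f s)
    (hnot : ∃ v : V,
      fR tl hd S f v <
        Nat.card {e : A ⊕ TreeIdx S f // starTail tl S f e = some v}) :
    ¬ ∃ T : TreeIdx S f → Finset A, IsCanonical tl hd S f T ∧ CoversAll T := by
  classical
  rintro ⟨T, hcan, hcov⟩
  obtain ⟨v, hv⟩ := hnot
  choose idx hidx using hcov
  -- the injection
  have hparts : ∀ e : A, tl e = v → (idx e).1.1 ∈ RD tl hd S v ∧ (idx e).1.1 ≠ v := by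
    intro e he
    have hi := hidx e
    have hspan := (hcan (idx e)).mem_tail e hi
    simp only [Set.mem_setOf_eq] at hspan
    rw [he] at hspan
    refine ⟨Finset.mem_filter.mpr ⟨(idx e).1.2, hspan⟩, ?_⟩
    have := (hcan (idx e)).root_no_out e hi
    rw [he] at this
    exact fun h => this h.symm
  let g : {x : A ⊕ TreeIdx S f // starTail tl S f x = some v} →
      {i : TreeIdx S f // i.1.1 ∈ RD tl hd S v} := fun x =>
    ⟨Sum.elim idx id x.1, by
      obtain ⟨x, hx⟩ := x
      cases x with
      | inl e =>
          have he : tl e = v := by simpa [starTail] using hx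
          exact (hparts e he).1
      | inr p =>
          have hp : p.1.1 = v := by simpa [starTail] using hx
          simp only [Sum.elim_inr, id]
          refine Finset.mem_filter.mpr ⟨p.1.2, ?_⟩
          rw [hp]
          exact Relation.ReflTransGen.refl⟩
  have hginj : Function.Injective g := by
    rintro ⟨x₁, h₁⟩ ⟨x₂, h₂⟩ h
    have h' : Sum.elim idx id x₁ = Sum.elim idx id x₂ := congrArg Subtype.val h
    apply Subtype.ext
    cases x₁ with
    | inl e₁ =>
      have ht₁ : tl e₁ = v := by simpa [starTail] using h₁
      cases x₂ with
      | inl e₂ =>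
        have ht₂ : tl e₂ = v := by simpa [starTail] using h₂
        simp only [Sum.elim_inl] at h'
        have hi₁ : e₁ ∈ T (idx e₁) := hidx e₁
        have hi₂ : e₂ ∈ T (idx e₁) := h' ▸ hidx e₂
        have hspan : v ∈ {u | ArcReach tl hd Set.univ u (idx e₁).1.1} := by
          have := (hcan (idx e₁)).mem_tail e₁ hi₁
          rwa [ht₁] at this
        have hne : v ≠ (idx e₁).1.1 := by
          have := (hcan (idx e₁)).root_no_out e₁ hi₁
          rwa [ht₁] at this
        obtain ⟨e₀, he₀, hu⟩ := (hcan (idx e₁)).out_unique v hspan hne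
        have h1 := hu e₁ ⟨hi₁, ht₁⟩
        have h2 := hu e₂ ⟨hi₂, ht₂⟩
        show (Sum.inl e₁ : A ⊕ TreeIdx S f) = Sum.inl e₂
        rw [h1, h2]
      | inr p₂ =>
        have hp₂ : p₂.1.1 = v := by simpa [starTail] using h₂
        simp only [Sum.elim_inl, Sum.elim_inr, id] at h'
        exact absurd (h' ▸ hp₂) (hparts e₁ ht₁).2
    | inr p₁ =>
      have hp₁ : p₁.1.1 = v := by simpa [starTail] using h₁
      cases x₂ with
      | inl e₂ =>
        have ht₂ : tl e₂ = v := by simpa [starTail] using h₂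
        simp only [Sum.elim_inl, Sum.elim_inr, id] at h'
        exact absurd (h' ▸ hp₁) (hparts e₂ ht₂).2
      | inr p₂ =>
        simp only [Sum.elim_inr, id] at h'
        show (Sum.inr p₁ : A ⊕ TreeIdx S f) = Sum.inr p₂
        rw [h']
  have key : Nat.card {x : A ⊕ TreeIdx S f // starTail tl S f x = some v}
      ≤ Nat.card {i : TreeIdx S f // i.1.1 ∈ RD tl hd S v} :=
    Nat.card_le_card_of_injective g hginj
  have hK : Nat.card {i : TreeIdx S f // i.1.1 ∈ RD tl hd S v} = fR tl hd S f v := by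
    have e : {i : TreeIdx S f // i.1.1 ∈ RD tl hd S v} ≃
        Σ s : {x : V // x ∈ RD tl hd S v}, Fin (f s.1) :=
      { toFun := fun i => ⟨⟨i.1.1.1, i.2⟩, i.1.2⟩
        invFun := fun p => ⟨⟨⟨p.1.1, (Finset.mem_filter.mp p.1.2).1⟩, p.2⟩, p.1.2⟩
        left_inv := fun i => rfl
        right_inv := fun p => rfl }
    rw [Nat.card_congr e, Nat.card_eq_fintype_card, Fintype.card_sigma]
    simp only [Fintype.card_fin]
    rw [fR]
    exact Finset.sum_coe_sort (RD tl hd S v) f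
  omega
end
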